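/- Let W be symmetric doubly stochastic with eigenvalues in (−1,1] and simple eigenvalue 1, H̃ = diag(h₁h₁ᵀ,…,h_Nh_Nᵀ) with H of full column rank, and α > 0. If v₁ ∈ ℂ^{Nm} is nonzero with v₁*((W²−I_N)⊗I_m − αH̃)v₁ = 0, then (W⊗I_m)v₁ = v₁ and v₁*H̃v₁ = 0, and hence v₁ = 1_N ⊗ c for some c ∈ ℝ^m with Hc = 0, forcing v₁ = 0, a contradiction; therefore v₁*((W²−I_N)⊗I_m − αH̃)v₁ < 0 for all nonzero v₁. -/

import Mathlib

open Matrix Kronecker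

lemma aux_inj {N m : ℕ} (H : Matrix (Fin N) (Fin m) ℝ) (hrank : H.rank = m)
    {c : Fin m → ℝ} (hc : H *ᵥ c = 0) : c = 0 := by
  have hker : LinearMap.ker H.mulVecLin = ⊥ := by
    have h1 := LinearMap.finrank_range_add_finrank_ker H.mulVecLin
    rw [Matrix.rank] at hrank
    rw [hrank] at h1
    simp [Module.finrank_pi] at h1
    exact h1
  have : c ∈ LinearMap.ker H.mulVecLin := by
    simpa [Matrix.mulVecLin] using hc
  simpa [hker] using this

lemma aux_abc {N : ℕ} (A B : Matrix (Fin N) (Fin N) ℝ) (hA : Aᵀ = A) (y : Fin N → ℝ) :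
    y ⬝ᵥ ((A * B * A) *ᵥ y) = (A *ᵥ y) ⬝ᵥ (B *ᵥ (A *ᵥ y)) := by
  rw [show (A*B*A) *ᵥ y = A *ᵥ (B *ᵥ (A *ᵥ y)) from by
      rw [Matrix.mulVec_mulVec, Matrix.mulVec_mulVec],
    Matrix.dotProduct_mulVec, ← Matrix.mulVec_transpose, hA]

lemma aux_kron {N m : ℕ} (A : Matrix (Fin N) (Fin N) ℝ) (x : Fin N × Fin m → ℝ) :
    x ⬝ᵥ ((A ⊗ₖ (1 : Matrix (Fin m) (Fin m) ℝ)) *ᵥ x)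
      = ∑ a, (fun i => x (i,a)) ⬝ᵥ (A *ᵥ (fun i => x (i,a))) := by
  simp [dotProduct, mulVec, Matrix.one_apply, Fintype.sum_prod_type, Finset.mul_sum,
    mul_ite, ite_mul]
  rw [Finset.sum_comm]

lemma aux_Hform {N m : ℕ} (H : Matrix (Fin N) (Fin m) ℝ)
    (Htil : Matrix (Fin N × Fin m) (Fin N × Fin m) ℝ)
    (hHtil : ∀ i j a b, Htil (i, a) (j, b) = if i = j then H i a * H i b else 0)
    (x : Fin N × Fin m → ℝ) :
    x ⬝ᵥ (Htil *ᵥ x) = ∑ i, (∑ a, H i a * x (i,a))^2 := by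
  have key : ∀ (i : Fin N) (a : Fin m), (Htil *ᵥ x) (i,a) = H i a * ∑ b, H i b * x (i,b) := by
    intro i a
    simp [mulVec, dotProduct, Fintype.sum_prod_type, hHtil, ite_mul, zero_mul,
      Finset.sum_ite_irrel, Finset.sum_ite_eq, Finset.mul_sum, mul_assoc]
  unfold dotProduct
  rw [Fintype.sum_prod_type]
  refine Finset.sum_congr rfl fun i _ => ?_
  have : ∀ a : Fin m, x (i,a) * (Htil *ᵥ x) (i,a) = (H i a * x (i,a)) * ∑ b, H i b * x (i,b) := by
    intro a; rw [key i a]; ring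
  rw [Finset.sum_congr rfl fun a _ => this a, ← Finset.sum_mul, sq]

lemma aux_real (N m : ℕ) (H : Matrix (Fin N) (Fin m) ℝ) (hrank : H.rank = m)
    (W : Matrix (Fin N) (Fin N) ℝ) (hsymm : W.IsSymm)
    (hlow : (W + 1).PosDef) (hup : ((1 : Matrix (Fin N) (Fin N) ℝ) - W).PosSemidef)
    (hsimple : ∀ v : Fin N → ℝ, W *ᵥ v = v → ∃ c : ℝ, v = fun _ => c)
    (Htil : Matrix (Fin N × Fin m) (Fin N × Fin m) ℝ)
    (hHtil : ∀ i j a b, Htil (i, a) (j, b) = if i = j then H i a * H i b else 0)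
    (α : ℝ) (hα : 0 < α) :
    ∀ x : Fin N × Fin m → ℝ, x ≠ 0 →
      x ⬝ᵥ ((((W ^ 2 - 1) ⊗ₖ (1 : Matrix (Fin m) (Fin m) ℝ)) - α • Htil) *ᵥ x) < 0 := by
  intro x hx
  set P : Matrix (Fin N) (Fin N) ℝ := 1 - W with hPdef
  set Q : Matrix (Fin N) (Fin N) ℝ := W + 1 with hQdef
  have hP : Pᵀ = P := by simp [hPdef, Matrix.transpose_sub, hsymm.eq]
  have hQ : Qᵀ = Q := by simp [hQdef, Matrix.transpose_add, hsymm.eq]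
  have hkey : P * Q * P + Q * P * Q = (1 - W^2) + (1 - W^2) := by
    simp only [hPdef, hQdef]; noncomm_ring
  have hq2 : ∀ y : Fin N → ℝ, y ⬝ᵥ ((1 - W^2) *ᵥ y) + y ⬝ᵥ ((1 - W^2) *ᵥ y)
      = (P *ᵥ y) ⬝ᵥ (Q *ᵥ (P *ᵥ y)) + (Q *ᵥ y) ⬝ᵥ (P *ᵥ (Q *ᵥ y)) := by
    intro y
    have h1 : y ⬝ᵥ (((P*Q*P) + (Q*P*Q)) *ᵥ y) = y ⬝ᵥ (((1-W^2)+(1-W^2)) *ᵥ y) := by rw [hkey]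
    rw [Matrix.add_mulVec, dotProduct_add, Matrix.add_mulVec, dotProduct_add,
      aux_abc P Q hP y, aux_abc Q P hQ y] at h1
    exact h1.symm
  have t1 : ∀ z : Fin N → ℝ, 0 ≤ z ⬝ᵥ (Q *ᵥ z) := by
    intro z
    simpa using hlow.posSemidef.dotProduct_mulVec_nonneg z
  have t2 : ∀ z : Fin N → ℝ, 0 ≤ z ⬝ᵥ (P *ᵥ z) := by
    intro z
    simpa using hup.dotProduct_mulVec_nonneg z
  have hq_nonneg : ∀ y : Fin N → ℝ, 0 ≤ y ⬝ᵥ ((1 - W^2) *ᵥ y) := by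
    intro y
    have := hq2 y
    have a1 := t1 (P *ᵥ y)
    have a2 := t2 (Q *ᵥ y)
    linarith
  have hq_zero : ∀ y : Fin N → ℝ, y ⬝ᵥ ((1 - W^2) *ᵥ y) = 0 → W *ᵥ y = y := by
    intro y hy
    have a2 := t2 (Q *ᵥ y)
    have hle : (P *ᵥ y) ⬝ᵥ (Q *ᵥ (P *ᵥ y)) ≤ 0 := by
      have := hq2 y; linarith
    have hPy : P *ᵥ y = 0 := by
      by_contra h
      have := hlow.dotProduct_mulVec_pos h
      simp only [star_trivial] at this
      exact absurd (lt_of_lt_of_le this hle) (lt_irrefl 0)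
    have hsub : y - W *ᵥ y = 0 := by
      simpa [hPdef, Matrix.sub_mulVec, Matrix.one_mulVec] using hPy
    have := sub_eq_zero.mp hsub
    exact this.symm
  -- decompose the quadratic form
  have hkron := aux_kron (W^2 - 1) x
  have hHform := aux_Hform H Htil hHtil x
  have hflip : ∀ y : Fin N → ℝ, y ⬝ᵥ ((W^2 - 1) *ᵥ y) = -(y ⬝ᵥ ((1 - W^2) *ᵥ y)) := by
    intro y
    simp [Matrix.sub_mulVec, dotProduct_sub, Matrix.one_mulVec]
  have hsplit : x ⬝ᵥ ((((W^2 - 1) ⊗ₖ (1 : Matrix (Fin m) (Fin m) ℝ)) - α • Htil) *ᵥ x)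
      = (∑ a, (fun i => x (i,a)) ⬝ᵥ ((W^2 - 1) *ᵥ (fun i => x (i,a))))
        - α * (x ⬝ᵥ (Htil *ᵥ x)) := by
    rw [Matrix.sub_mulVec, dotProduct_sub, hkron, Matrix.smul_mulVec,
      dotProduct_smul, smul_eq_mul]
  rw [hsplit, hHform]
  rw [Finset.sum_congr rfl fun a _ => hflip (fun i => x (i,a)), Finset.sum_neg_distrib]
  have hQsum : 0 ≤ ∑ a, (fun i => x (i,a)) ⬝ᵥ ((1 - W^2) *ᵥ (fun i => x (i,a))) :=
    Finset.sum_nonneg fun a _ => hq_nonneg _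
  have hSsum : 0 ≤ ∑ i, (∑ a, H i a * x (i,a))^2 :=
    Finset.sum_nonneg fun i _ => sq_nonneg _
  have hpos : 0 < (∑ a, (fun i => x (i,a)) ⬝ᵥ ((1 - W^2) *ᵥ (fun i => x (i,a))))
      + α * ∑ i, (∑ a, H i a * x (i,a))^2 := by
    rcases lt_or_eq_of_le hQsum with h | hQ0
    · nlinarith
    rcases lt_or_eq_of_le hSsum with h | hS0
    · nlinarith
    -- both are zero: derive contradiction
    exfalso
    have hqa : ∀ a : Fin m, (fun i => x (i,a)) ⬝ᵥ ((1 - W^2) *ᵥ (fun i => x (i,a))) = 0 := by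
      have := (Finset.sum_eq_zero_iff_of_nonneg (fun a _ => hq_nonneg
        (fun i => x (i,a)))).mp hQ0.symm
      intro a; exact this a (Finset.mem_univ a)
    have hsi : ∀ i : Fin N, (∑ a, H i a * x (i,a)) = 0 := by
      have := (Finset.sum_eq_zero_iff_of_nonneg (fun i _ => sq_nonneg
        (∑ a, H i a * x (i,a)))).mp hS0.symm
      intro i
      exact pow_eq_zero_iff (n := 2) (by norm_num) |>.mp (this i (Finset.mem_univ i))
    have hc : ∀ a : Fin m, ∃ c : ℝ, (fun i => x (i,a)) = fun _ => c := by
      intro a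
      exact hsimple _ (hq_zero _ (hqa a))
    choose c hcspec using hc
    have hxc : ∀ i a, x (i,a) = c a := by
      intro i a
      exact congrFun (hcspec a) i
    have hHc : H *ᵥ c = 0 := by
      funext i
      have : (∑ a, H i a * c a) = 0 := by
        rw [← hsi i]
        exact Finset.sum_congr rfl fun a _ => by rw [hxc i a]
      simpa [mulVec, dotProduct] using this
    have hc0 : c = 0 := aux_inj H hrank hHc
    apply hx
    funext p
    rw [show p = (p.1, p.2) from rfl, hxc p.1 p.2, hc0]
    rfl
  linarith

/-- For all nonzero `v₁ ∈ ℂ^{Nm}`, `v₁*((W²−I)⊗I_m − αH̃)v₁ < 0`. -/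
theorem stmt15 (N m : ℕ) (H : Matrix (Fin N) (Fin m) ℝ) (hrank : H.rank = m)
    (W : Matrix (Fin N) (Fin N) ℝ) (hsymm : W.IsSymm)
    (hnonneg : ∀ i j, 0 ≤ W i j) (hrow : W *ᵥ (fun _ => 1) = fun _ => 1)
    (hlow : (W + 1).PosDef) (hup : ((1 : Matrix (Fin N) (Fin N) ℝ) - W).PosSemidef)
    (hsimple : ∀ v : Fin N → ℝ, W *ᵥ v = v → ∃ c : ℝ, v = fun _ => c)
    (Htil : Matrix (Fin N × Fin m) (Fin N × Fin m) ℝ)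
    (hHtil : ∀ i j a b, Htil (i, a) (j, b) = if i = j then H i a * H i b else 0)
    (α : ℝ) (hα : 0 < α) :
    ∀ v₁ : Fin N × Fin m → ℂ, v₁ ≠ 0 →
      (star v₁ ⬝ᵥ
        ((((W ^ 2 - 1) ⊗ₖ (1 : Matrix (Fin m) (Fin m) ℝ)) - α • Htil).map Complex.ofReal *ᵥ v₁)).re < 0 := by
  intro v hv
  set M : Matrix (Fin N × Fin m) (Fin N × Fin m) ℝ :=
    ((W ^ 2 - 1) ⊗ₖ (1 : Matrix (Fin m) (Fin m) ℝ)) - α • Htil with hMdef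
  set xr : Fin N × Fin m → ℝ := fun p => (v p).re with hxr
  set xi : Fin N × Fin m → ℝ := fun p => (v p).im with hxi
  have hre : (star v ⬝ᵥ (M.map Complex.ofReal *ᵥ v)).re
      = xr ⬝ᵥ (M *ᵥ xr) + xi ⬝ᵥ (M *ᵥ xi) := by
    simp only [dotProduct, mulVec, Matrix.map_apply, Pi.star_apply]
    rw [Complex.re_sum, ← Finset.sum_add_distrib]
    refine Finset.sum_congr rfl fun p _ => ?_
    rw [Finset.mul_sum, Complex.re_sum, Finset.mul_sum, Finset.mul_sum,
      ← Finset.sum_add_distrib]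
    refine Finset.sum_congr rfl fun q _ => ?_
    simp [Complex.mul_re, hxr, hxi]
  have hle : ∀ y : Fin N × Fin m → ℝ, y ⬝ᵥ (M *ᵥ y) ≤ 0 := by
    intro y
    by_cases h : y = 0
    · simp [h]
    · exact (aux_real N m H hrank W hsymm hlow hup hsimple Htil hHtil α hα y h).le
  have hone : xr ≠ 0 ∨ xi ≠ 0 := by
    by_contra h
    push_neg at h
    apply hv
    funext p
    have h1 := congrFun h.1 p
    have h2 := congrFun h.2 p
    simp only [hxr, hxi, Pi.zero_apply] at h1 h2
    exact Complex.ext h1 h2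
  rw [hre]
  rcases hone with h | h
  · have := aux_real N m H hrank W hsymm hlow hup hsimple Htil hHtil α hα xr h
    linarith [hle xi]
  · have := aux_real N m H hrank W hsymm hlow hup hsimple Htil hHtil α hα xi h
    linarith [hle xr]
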